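/- Let T be a bounded linear operator on a complex Banach space X, and suppose that for every nonempty relatively open subset U of the spectrum σ(T), the glocal spectral subspace 𝒳_T(closure(U)) is dense in X. Then for every nontrivial closed subspace M of X* invariant under the adjoint T*, one has σ(T*) ⊆ σ(T*|_M) ⊆ η(σ(T*)), where η(σ(T*)) is the full spectrum of T*. -/

import Mathlib

open Set Filter Topology Bornology Complex

noncomputable section




variable {X : Type*} [NormedAddCommGroup X] [NormedSpace ℂ X]

/-- The glocal spectral subspace `𝒳_T(F)` of a bounded operator `T`. -/
def glocalSubspace (T : X →L[ℂ] X) (F : Set ℂ) : Set X :=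
  {x | ∃ f : ℂ → X, AnalyticOnNhd ℂ f Fᶜ ∧ ∀ z ∈ Fᶜ, T (f z) - z • f z = x}

/-- The local resolvent set `ρ_T(x)`. -/
def localResolventSet (T : X →L[ℂ] X) (x : X) : Set ℂ :=
  ⋃₀ {U : Set ℂ | IsOpen U ∧ ∃ f : ℂ → X, AnalyticOnNhd ℂ f U ∧ ∀ z ∈ U, T (f z) - z • f z = x}

/-- The local spectrum `σ_T(x)`. -/
def localSpectrum (T : X →L[ℂ] X) (x : X) : Set ℂ := (localResolventSet T x)ᶜ

/-- The local spectral subspace `X_T(F)`. -/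
def localSubspace (T : X →L[ℂ] X) (F : Set ℂ) : Set X := {x | localSpectrum T x ⊆ F}

/-- Dunford's property (C). -/
def HasPropertyC (T : X →L[ℂ] X) : Prop :=
  ∀ F : Set ℂ, IsClosed F → IsClosed (localSubspace T F)

/-- The single-valued extension property. -/
def HasSVEP (T : X →L[ℂ] X) : Prop :=
  ∀ U : Set ℂ, IsOpen U → ∀ f : ℂ → X, AnalyticOnNhd ℂ f U →
    (∀ z ∈ U, T (f z) - z • f z = 0) → ∀ z ∈ U, f z = 0

/-- The point spectrum of an operator. -/
def pointSpectrum (T : X →L[ℂ] X) : Set ℂ := {μ : ℂ | ∃ x : X, x ≠ 0 ∧ T x = μ • x}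

/-- The local spectral radius `r_T(x) = limsup_n ‖Tⁿx‖^(1/n)`. -/
def localSpectralRadius (T : X →L[ℂ] X) (x : X) : ℝ :=
  Filter.limsup (fun n : ℕ => ‖(T ^ n) x‖ ^ (1 / (n : ℝ))) Filter.atTop

/-- The adjoint operator `T*` acting on the dual space `X*`. -/
def dualOp (T : X →L[ℂ] X) : StrongDual ℂ X →L[ℂ] StrongDual ℂ X :=
  (ContinuousLinearMap.compL ℂ X X ℂ).flip T

/-- Restriction of an operator to an invariant subspace. -/
def restrictOp (T : X →L[ℂ] X) (M : Submodule ℂ X) (h : ∀ x ∈ M, T x ∈ M) : M →L[ℂ] M :=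
  (T.comp M.subtypeL).codRestrict M (fun x => h x.1 x.2)

/-- The full spectrum `η(K)`: the union of `K` with all the bounded connected
components of its complement. -/
def fullSpectrum (K : Set ℂ) : Set ℂ :=
  K ∪ {z : ℂ | z ∉ K ∧ Bornology.IsBounded (connectedComponentIn Kᶜ z)}

/-- `U` is a nonempty relatively open subset of `σ(T)`. -/
def RelativelyOpenInSpectrum (T : X →L[ℂ] X) (U : Set ℂ) : Prop :=
  U.Nonempty ∧ ∃ V : Set ℂ, IsOpen V ∧ U = spectrum ℂ T ∩ V


set_option maxHeartbeats 1600000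
set_option synthInstance.maxHeartbeats 400000

/-! ### Auxiliary lemmas -/

/-- Hahn–Banach separation for a closed subspace. -/
lemma sep_of_closed {E : Type*} [NormedAddCommGroup E] [NormedSpace ℂ E]
    (M : Submodule ℂ E) (hM : IsClosed (M : Set E)) {v : E} (hv : v ∉ M) :
    ∃ ψ : E →L[ℂ] ℂ, ψ v ≠ 0 ∧ ∀ m ∈ M, ψ m = 0 := by
  haveI : IsClosed (M : Set E) := hM
  have hvQ : (Submodule.Quotient.mk v : E ⧸ M) ≠ 0 := by
    simpa [Submodule.Quotient.mk_eq_zero] using hv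
  obtain ⟨g, -, hg⟩ := exists_dual_vector ℂ (Submodule.Quotient.mk v : E ⧸ M) (norm_ne_zero_iff.mpr hvQ)
  have hcont : Continuous (M.mkQ : E → E ⧸ M) := by
    refine AddMonoidHomClass.continuous_of_bound M.mkQ 1 fun m => ?_
    simpa using Submodule.Quotient.norm_mk_le M m
  refine ⟨g.comp ⟨M.mkQ, hcont⟩, ?_, ?_⟩
  · have : g (Submodule.Quotient.mk v : E ⧸ M) = ‖(Submodule.Quotient.mk v : E ⧸ M)‖ := hg
    simp only [ContinuousLinearMap.comp_apply, ContinuousLinearMap.coe_mk']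
    rw [show M.mkQ v = (Submodule.Quotient.mk v : E ⧸ M) from rfl, this]
    exact_mod_cast norm_ne_zero_iff.mpr hvQ
  · intro m hm
    have : (Submodule.Quotient.mk m : E ⧸ M) = 0 := (Submodule.Quotient.mk_eq_zero M).mpr hm
    simp only [ContinuousLinearMap.comp_apply, ContinuousLinearMap.coe_mk']
    rw [show M.mkQ m = (Submodule.Quotient.mk m : E ⧸ M) from rfl, this, map_zero]

lemma mem_resolventSet_iff' {E : Type*} [NormedAddCommGroup E] [NormedSpace ℂ E]
    (a : E →L[ℂ] E) {z : ℂ} :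
    z ∈ resolventSet ℂ a ↔ z ∉ spectrum ℂ a :=
  ⟨fun h => spectrum.notMem_iff.mpr (spectrum.mem_resolventSet_iff.mp h),
   fun h => spectrum.mem_resolventSet_iff.mpr (spectrum.notMem_iff.mp h)⟩

lemma mem_resolventSet_of_norm_lt'' {E : Type*} [NormedAddCommGroup E] [NormedSpace ℂ E]
    [CompleteSpace E] (A : E →L[ℂ] E) {z : ℂ} (hz : ‖A‖ < ‖z‖) :
    z ∈ resolventSet ℂ A := by
  apply spectrum.mem_resolventSet_of_norm_lt_mul
  calc ‖A‖ * ‖(1 : E →L[ℂ] E)‖ ≤ ‖A‖ * 1 := by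
        gcongr; exact ContinuousLinearMap.norm_id_le
    _ < ‖z‖ := by simpa using hz

lemma resolvent_apply_eq {E : Type*} [NormedAddCommGroup E] [NormedSpace ℂ E]
    (A : E →L[ℂ] E) {z : ℂ} (hz : z ∈ resolventSet ℂ A) (m : E) :
    z • resolvent A z m - A (resolvent A z m) = m := by
  have h1 : (algebraMap ℂ (E →L[ℂ] E) z - A) * resolvent A z = 1 := by
    rw [spectrum.resolvent_eq hz]
    exact hz.unit.mul_inv
  have := congrFun (congrArg (fun (B : E →L[ℂ] E) => (B : E → E)) h1) m
  simpa [ContinuousLinearMap.mul_apply, Algebra.algebraMap_eq_smul_one, sub_smul,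
    ContinuousLinearMap.sub_apply] using this

lemma resolvent_apply_eq' {E : Type*} [NormedAddCommGroup E] [NormedSpace ℂ E]
    (A : E →L[ℂ] E) {z : ℂ} (hz : z ∈ resolventSet ℂ A) (m : E) :
    resolvent A z (z • m - A m) = m := by
  have h1 : resolvent A z * (algebraMap ℂ (E →L[ℂ] E) z - A) = 1 := by
    rw [spectrum.resolvent_eq hz]
    exact hz.unit.inv_mul
  have := congrFun (congrArg (fun (B : E →L[ℂ] E) => (B : E → E)) h1) m
  simpa [ContinuousLinearMap.mul_apply, Algebra.algebraMap_eq_smul_one, sub_smul,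
    ContinuousLinearMap.sub_apply] using this

/-- If `M` is a closed invariant subspace and `‖A‖ < ‖z‖`, the resolvent leaves `M` invariant. -/
lemma resolvent_mem_of_norm_lt {E : Type*} [NormedAddCommGroup E] [NormedSpace ℂ E]
    [CompleteSpace E] (A : E →L[ℂ] E) (M : Submodule ℂ E)
    (hMclosed : IsClosed (M : Set E)) (hinv : ∀ x ∈ M, A x ∈ M)
    {z : ℂ} (hz : ‖A‖ < ‖z‖) {m : E} (hm : m ∈ M) :
    resolvent A z m ∈ M := by
  have hρ := mem_resolventSet_of_norm_lt'' A hz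
  set y := resolvent A z m with hy
  have hznz : z ≠ 0 := by
    intro h; rw [h, norm_zero] at hz; exact absurd hz (not_lt.mpr (norm_nonneg A))
  have key : y = z⁻¹ • (m + A y) := by
    have := resolvent_apply_eq A hρ m
    rw [← hy] at this
    have : z • y = m + A y := by linear_combination (norm := module) this
    calc y = z⁻¹ • (z • y) := by rw [smul_smul, inv_mul_cancel₀ hznz, one_smul]
      _ = z⁻¹ • (m + A y) := by rw [this]
  set u : ℕ → E := fun n => Nat.rec (0 : E) (fun _ w => z⁻¹ • (m + A w)) n with hu
  have humem : ∀ n, u n ∈ M := by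
    intro n; induction n with
    | zero => exact M.zero_mem
    | succ n ih => exact M.smul_mem _ (M.add_mem hm (hinv _ ih))
  set q : ℝ := ‖A‖ / ‖z‖ with hq
  have hq1 : q < 1 := (div_lt_one (lt_of_le_of_lt (norm_nonneg A) hz)).mpr hz
  have hq0 : 0 ≤ q := div_nonneg (norm_nonneg A) (norm_nonneg z)
  have hbound : ∀ n, ‖u n - y‖ ≤ q ^ n * ‖y‖ := by
    intro n; induction n with
    | zero => simp [hu]
    | succ n ih =>
      have : u (n+1) - y = z⁻¹ • (A (u n) - A y) := by
        show z⁻¹ • (m + A (u n)) - y = _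
        conv_lhs => rw [key]
        rw [← smul_sub]
        congr 1
        abel
      rw [this, norm_smul]
      calc ‖z⁻¹‖ * ‖A (u n) - A y‖ ≤ ‖z⁻¹‖ * (‖A‖ * ‖u n - y‖) := by
            gcongr
            rw [← map_sub]
            exact A.le_opNorm _
        _ = q * ‖u n - y‖ := by rw [hq, norm_inv]; ring
        _ ≤ q * (q ^ n * ‖y‖) := by gcongr
        _ = q ^ (n+1) * ‖y‖ := by ring
  have hlim : Tendsto u atTop (nhds y) := by
    rw [tendsto_iff_norm_sub_tendsto_zero]
    have h0 : Tendsto (fun n => q ^ n * ‖y‖) atTop (nhds 0) := by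
      simpa using (tendsto_pow_atTop_nhds_zero_of_lt_one hq0 hq1).mul_const ‖y‖
    refine squeeze_zero (fun n => norm_nonneg _) hbound h0
  exact hMclosed.mem_of_tendsto hlim (Filter.Eventually.of_forall humem)

lemma analyticOnNhd_resolvent_comp' {E : Type*} [NormedAddCommGroup E] [NormedSpace ℂ E]
    [CompleteSpace E] (A : E →L[ℂ] E) (L : (E →L[ℂ] E) →L[ℂ] ℂ) :
    AnalyticOnNhd ℂ (fun z => L (resolvent A z)) (resolventSet ℂ A) := by
  apply DifferentiableOn.analyticOnNhd _ (spectrum.isOpen_resolventSet A)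
  intro z hz
  exact (L.differentiableAt.comp z
    (spectrum.hasDerivAt_resolvent hz).differentiableAt).differentiableWithinAt

lemma tendsto_eval_resolvent {E : Type*} [NormedAddCommGroup E] [NormedSpace ℂ E]
    [CompleteSpace E] (A : E →L[ℂ] E) (L : (E →L[ℂ] E) →L[ℂ] ℂ) :
    Tendsto (fun z => L (resolvent A z)) (cobounded ℂ) (nhds 0) := by
  have h2 := (L.continuous.tendsto 0).comp
    (spectrum.resolvent_tendsto_cobounded (𝕜 := ℂ) A)
  rwa [map_zero] at h2

/-- The gluing/Liouville argument. -/
lemma liouville_resolvent {E : Type*} [NormedAddCommGroup E] [NormedSpace ℂ E] [CompleteSpace E]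
    (S : E →L[ℂ] E) (L : (E →L[ℂ] E) →L[ℂ] ℂ) (p : ℂ → ℂ)
    (F : Set ℂ) (hFclosed : IsClosed F)
    (hFρ : ∀ z ∈ F, z ∈ resolventSet ℂ S)
    (hp : AnalyticOnNhd ℂ p Fᶜ)
    (hover : ∀ z ∈ resolventSet ℂ S, z ∉ F → p z = -(L (resolvent S z))) :
    ∀ z ∈ resolventSet ℂ S, L (resolvent S z) = 0 := by
  classical
  set G : ℂ → ℂ := fun z => if z ∈ spectrum ℂ S then p z else -(L (resolvent S z)) with hG
  have hdiff : Differentiable ℂ G := by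
    intro z
    by_cases hzS : z ∈ spectrum ℂ S
    · have hzF : z ∉ F := fun h => ((mem_resolventSet_iff' S).mp (hFρ z h)) hzS
      have hev : G =ᶠ[nhds z] p := by
        filter_upwards [hFclosed.isOpen_compl.mem_nhds hzF] with w hw
        by_cases hwS : w ∈ spectrum ℂ S
        · simp only [hG, if_pos hwS]
        · have hwρ : w ∈ resolventSet ℂ S := (mem_resolventSet_iff' S).mpr hwS
          simp only [hG, if_neg hwS]
          exact (hover w hwρ hw).symm
      exact ((hp z hzF).differentiableAt).congr_of_eventuallyEq hev
    · have hzρ : z ∈ resolventSet ℂ S := (mem_resolventSet_iff' S).mpr hzS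
      have hev : G =ᶠ[nhds z] fun w => -(L (resolvent S w)) := by
        filter_upwards [(spectrum.isOpen_resolventSet S).mem_nhds hzρ] with w hw
        simp only [hG, if_neg ((mem_resolventSet_iff' S).mp hw)]
      exact (((analyticOnNhd_resolvent_comp' S L) z hzρ).differentiableAt.neg).congr_of_eventuallyEq
        hev
  have htend : Tendsto G (cobounded ℂ) (nhds 0) := by
    have h1 : Tendsto (fun w => -(L (resolvent S w))) (cobounded ℂ) (nhds 0) := by
      simpa using (tendsto_eval_resolvent S L).neg
    refine h1.congr' ?_
    filter_upwards [eventually_cobounded_le_norm (‖S‖ + 1)] with w hw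
    have hwρ : w ∈ resolventSet ℂ S := mem_resolventSet_of_norm_lt'' S (by linarith)
    simp only [hG, if_neg ((mem_resolventSet_iff' S).mp hwρ)]
  have hG0 : ∀ z, G z = 0 := by
    have := hdiff.eq_const_of_tendsto_cocompact
      (by rwa [← Metric.cobounded_eq_cocompact])
    intro z; rw [this]; rfl
  intro z hz
  have := hG0 z
  simp only [hG, if_neg ((mem_resolventSet_iff' S).mp hz), neg_eq_zero] at this
  exact this

/-- If an evaluation of the resolvent is constant on the resolvent set, the constant is zero. -/
lemma resolvent_eval_const_eq_zero {E : Type*} [NormedAddCommGroup E] [NormedSpace ℂ E]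
    [CompleteSpace E] (S : E →L[ℂ] E) (L : (E →L[ℂ] E) →L[ℂ] ℂ) (c : ℂ)
    (h : ∀ z ∈ resolventSet ℂ S, L (resolvent S z) = c) : c = 0 := by
  have htend := tendsto_eval_resolvent S L
  have hconst : (fun w => L (resolvent S w)) =ᶠ[cobounded ℂ] fun _ => c := by
    filter_upwards [eventually_cobounded_le_norm (‖S‖ + 1)] with w hw
    exact h w (mem_resolventSet_of_norm_lt'' S (by linarith))
  exact (tendsto_nhds_unique (htend.congr' hconst) tendsto_const_nhds).symm

lemma dualOp_apply (T : X →L[ℂ] X) (φ : StrongDual ℂ X) (y : X) :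
    dualOp T φ y = φ (T y) := rfl

lemma dualOp_mul (T S : X →L[ℂ] X) :
    dualOp (T * S) = dualOp S * dualOp T := by
  ext φ y; rfl

lemma dualOp_one : dualOp (1 : X →L[ℂ] X) = 1 := by ext φ y; rfl

lemma dualOp_algebraMap (z : ℂ) :
    dualOp (algebraMap ℂ (X →L[ℂ] X) z) = @algebraMap ℂ (StrongDual ℂ X →L[ℂ] StrongDual ℂ X) _ inferInstance inferInstance z := by
  ext φ y
  simp only [dualOp_apply, Algebra.algebraMap_eq_smul_one, ContinuousLinearMap.smul_apply,
    ContinuousLinearMap.one_apply, map_smul]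

lemma dualOp_sub (T S : X →L[ℂ] X) : dualOp (T - S) = dualOp T - dualOp S := by
  ext φ y
  simp only [dualOp_apply, ContinuousLinearMap.sub_apply, map_sub]

lemma isUnit_dualOp {T : X →L[ℂ] X} (h : IsUnit T) : IsUnit (dualOp T) := by
  obtain ⟨u, rfl⟩ := h
  refine ⟨⟨dualOp u.val, dualOp (↑u⁻¹ : X →L[ℂ] X), ?_, ?_⟩, rfl⟩
  · rw [← dualOp_mul, u.inv_mul, dualOp_one]
  · rw [← dualOp_mul, u.mul_inv, dualOp_one]

lemma spectrum_dualOp_subset (T : X →L[ℂ] X) :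
    spectrum ℂ (dualOp T) ⊆ spectrum ℂ T := by
  intro z hz
  rw [spectrum.mem_iff] at hz ⊢
  intro hU
  apply hz
  have := isUnit_dualOp hU
  rwa [dualOp_sub, dualOp_algebraMap] at this

/-- The spectrum of the restriction to a closed invariant subspace is contained in the
full spectrum. -/
lemma restrict_spectrum_subset_fullSpectrum {Y : Type*} [NormedAddCommGroup Y]
    [NormedSpace ℂ Y] [CompleteSpace Y] (A : Y →L[ℂ] Y)
    (M : Submodule ℂ Y) (hMclosed : IsClosed (M : Set Y)) (hinv : ∀ x ∈ M, A x ∈ M) :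
    spectrum ℂ (restrictOp A M hinv) ⊆ fullSpectrum (spectrum ℂ A) := by
  intro lam hlam
  by_contra hfull
  rw [fullSpectrum, Set.mem_union] at hfull
  push_neg at hfull
  obtain ⟨hlam1, hlam2⟩ := hfull
  rw [Set.mem_setOf_eq] at hlam2
  have hbdd : ¬ IsBounded (connectedComponentIn (spectrum ℂ A)ᶜ lam) := fun hb => hlam2 ⟨hlam1, hb⟩
  set C := connectedComponentIn (spectrum ℂ A)ᶜ lam with hC
  have hres : (spectrum ℂ A)ᶜ = resolventSet ℂ A := by
    rw [spectrum]; exact compl_compl _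
  have hCopen : IsOpen C := ((spectrum.isClosed (𝕜 := ℂ) A).isOpen_compl).connectedComponentIn
  have hCsub : C ⊆ resolventSet ℂ A := hres ▸ connectedComponentIn_subset _ _
  have hlamC : lam ∈ C := mem_connectedComponentIn hlam1
  have key : ∀ m ∈ M, resolvent A lam m ∈ M := by
    intro m hm
    by_contra hv
    obtain ⟨ψ, hψv, hψM⟩ := sep_of_closed M hMclosed hv
    set L : (Y →L[ℂ] Y) →L[ℂ] ℂ := ψ.comp (ContinuousLinearMap.apply ℂ Y m) with hL
    have hLapp : ∀ B : Y →L[ℂ] Y, L B = ψ (B m) := fun B => rfl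
    set h : ℂ → ℂ := fun z => L (resolvent A z) with hh
    have han : AnalyticOnNhd ℂ h C :=
      (analyticOnNhd_resolvent_comp' A L).mono hCsub
    obtain ⟨w, hwC, hw⟩ : ∃ w ∈ C, ‖A‖ < ‖w‖ := by
      by_contra hcon
      push_neg at hcon
      exact hbdd ((Metric.isBounded_closedBall (x := (0:ℂ)) (r := ‖A‖)).subset
        (fun z hz => by simpa [Metric.mem_closedBall] using hcon z hz))
    have hzero : ∀ z : ℂ, ‖A‖ < ‖z‖ → h z = 0 := by
      intro z hz
      exact hψM _ (resolvent_mem_of_norm_lt A M hMclosed hinv hz hm)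
    have hev : h =ᶠ[nhds w] 0 := by
      have : IsOpen {z : ℂ | ‖A‖ < ‖z‖} := isOpen_lt continuous_const continuous_norm
      filter_upwards [this.mem_nhds hw] with z hz using hzero z hz
    have := han.eqOn_zero_of_preconnected_of_eventuallyEq_zero
      isPreconnected_connectedComponentIn hwC hev hlamC
    exact hψv this
  have hρ : lam ∈ resolventSet ℂ A := hres ▸ hlam1
  set S := restrictOp A M hinv with hS
  set B : M →L[ℂ] M := ((resolvent A lam).comp M.subtypeL).codRestrict M
    (fun m => key m.1 m.2) with hB
  have hBcoe : ∀ u : M, ((B u : M) : Y) = resolvent A lam (u : Y) := fun u => rfl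
  have hScoe : ∀ u : M, ((S u : M) : Y) = A (u : Y) := fun u => rfl
  have h1 : (algebraMap ℂ (M →L[ℂ] M) lam - S) * B = 1 := by
    ext m
    simp only [ContinuousLinearMap.mul_apply, ContinuousLinearMap.sub_apply,
      ContinuousLinearMap.one_apply, Submodule.coe_sub, Algebra.algebraMap_eq_smul_one,
      ContinuousLinearMap.smul_apply, Submodule.coe_smul, SetLike.val_smul, hBcoe, hScoe]
    exact resolvent_apply_eq A hρ m
  have h2 : B * (algebraMap ℂ (M →L[ℂ] M) lam - S) = 1 := by
    ext m
    simp only [ContinuousLinearMap.mul_apply, ContinuousLinearMap.sub_apply,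
      ContinuousLinearMap.one_apply, Algebra.algebraMap_eq_smul_one,
      ContinuousLinearMap.smul_apply, hBcoe, hScoe, Submodule.coe_sub, SetLike.val_smul]
    exact resolvent_apply_eq' A hρ m
  have : IsUnit (algebraMap ℂ (M →L[ℂ] M) lam - S) :=
    ⟨⟨_, B, h1, h2⟩, rfl⟩
  rw [spectrum.mem_iff] at hlam
  exact hlam this

/-- The density hypothesis forces the spectrum of the adjoint to be contained in the spectrum
of its restriction to any nonzero closed invariant subspace. -/
lemma spectrum_subset_restrict [CompleteSpace X] (T : X →L[ℂ] X)
    (hdense : ∀ U : Set ℂ, RelativelyOpenInSpectrum T U →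
      Dense (glocalSubspace T (closure U)))
    (M : Submodule ℂ (StrongDual ℂ X)) (hMclosed : IsClosed (M : Set (StrongDual ℂ X)))
    (hMbot : M ≠ ⊥)
    (hinv : ∀ x ∈ M, dualOp T x ∈ M) :
    spectrum ℂ (dualOp T) ⊆ spectrum ℂ (restrictOp (dualOp T) M hinv) := by
  haveI : CompleteSpace M := hMclosed.completeSpace_coe
  set A := dualOp T with hA
  set S := restrictOp (dualOp T) M hinv with hS
  intro lam hlam
  by_contra hlamS
  obtain ⟨ε, hε, hball⟩ := Metric.isOpen_iff.mp (spectrum.isClosed (𝕜 := ℂ) S).isOpen_compl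
    lam hlamS
  set r : ℝ := ε / 2 with hr
  have hr0 : 0 < r := by positivity
  set U : Set ℂ := spectrum ℂ T ∩ Metric.ball lam r with hU
  have hUopen : RelativelyOpenInSpectrum T U :=
    ⟨⟨lam, spectrum_dualOp_subset T hlam, Metric.mem_ball_self hr0⟩,
      Metric.ball lam r, Metric.isOpen_ball, rfl⟩
  have hD := hdense U hUopen
  set F : Set ℂ := closure U with hF
  have hFS : ∀ z ∈ F, z ∈ resolventSet ℂ S := by
    intro z hz
    have h1 : z ∈ Metric.closedBall lam r :=
      (Metric.closure_ball_subset_closedBall : closure (Metric.ball lam r) ⊆ _)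
        (closure_mono (Set.inter_subset_right) hz)
    have h2 : z ∈ Metric.ball lam ε :=
      Metric.closedBall_subset_ball (by rw [hr]; linarith) h1
    exact (mem_resolventSet_iff' S).mpr (hball h2)
  have main : ∀ φ ∈ M, ∀ x ∈ glocalSubspace T F, φ x = 0 := by
    rintro φ hφ x ⟨f, hfan, hfeq⟩
    set Φ : M := ⟨φ, hφ⟩ with hΦ
    have hScoe : ∀ ψ : M, ((S ψ : M) : StrongDual ℂ X) = A (ψ : StrongDual ℂ X) :=
      fun ψ => rfl
    have hAapp : ∀ (ψ : StrongDual ℂ X) (y : X), A ψ y = ψ (T y) := fun ψ y => rfl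
    have hid : ∀ z ∈ resolventSet ℂ S, ∀ y : X,
        z * ((resolvent S z Φ : M) : StrongDual ℂ X) y
          - ((resolvent S z Φ : M) : StrongDual ℂ X) (T y) = φ y := by
      intro z hz y
      have h0 : z • resolvent S z Φ - S (resolvent S z Φ) = Φ := resolvent_apply_eq S hz Φ
      have h1 : z • ((resolvent S z Φ : M) : StrongDual ℂ X)
          - A ((resolvent S z Φ : M) : StrongDual ℂ X) = φ := by
        have := congrArg (fun ψ : M => (ψ : StrongDual ℂ X)) h0
        simpa [Submodule.coe_sub, SetLike.val_smul, hScoe] using this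
      have := congrArg (fun ψ : StrongDual ℂ X => ψ y) h1
      simpa [ContinuousLinearMap.sub_apply, ContinuousLinearMap.smul_apply, hAapp,
        smul_eq_mul] using this
    set L :=
      ((ContinuousLinearMap.apply ℂ ℂ x).comp M.subtypeL).comp
        (ContinuousLinearMap.apply ℂ M Φ) with hL
    have hLapp : ∀ B : M →L[ℂ] M, L B = ((B Φ : M) : StrongDual ℂ X) x := fun B => rfl
    set K :=
      ((ContinuousLinearMap.apply ℂ ℂ (T x)).comp M.subtypeL).comp
        (ContinuousLinearMap.apply ℂ M Φ) with hK
    have hKapp : ∀ B : M →L[ℂ] M, K B = ((B Φ : M) : StrongDual ℂ X) (T x) := fun B => rfl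
    have hp : AnalyticOnNhd ℂ (fun z => φ (f z)) Fᶜ :=
      fun z hz => (φ.analyticAt (f z)).comp (hfan z hz)
    have hover : ∀ z ∈ resolventSet ℂ S, z ∉ F → φ (f z) = -(L (resolvent S z)) := by
      intro z hz hzF
      rw [hLapp]
      have h2 := hid z hz (f z)
      have h3 : T (f z) = x + z • f z := by
        have := hfeq z hzF
        linear_combination (norm := module) this
      rw [h3, map_add, map_smul] at h2
      simp only [smul_eq_mul] at h2
      linear_combination -h2
    have hres0 := liouville_resolvent S L (fun z => φ (f z)) F isClosed_closure hFS hp hover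
    have hφx : ∀ z ∈ resolventSet ℂ S, K (resolvent S z) = -(φ x) := by
      intro z hz
      rw [hKapp]
      have h5 := hid z hz x
      rw [← hLapp, hres0 z hz] at h5
      linear_combination -h5
    have := resolvent_eval_const_eq_zero S K (-(φ x)) hφx
    simpa [neg_eq_zero] using this
  apply hMbot
  rw [Submodule.eq_bot_iff]
  intro φ hφ
  have hfun : (φ : X → ℂ) = (fun _ => 0) :=
    Continuous.ext_on hD φ.continuous continuous_const (fun x hx => main φ hφ x hx)
  ext y
  exact congrFun hfun y


/-- Under the density assumption on glocal spectral subspaces of `T`, for every nontrivial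
closed invariant subspace `M` of the adjoint `T*` one has
`σ(T*) ⊆ σ(T*|_M) ⊆ η(σ(T*))`. -/
theorem adjoint_spectrum_restrict {X : Type*} [NormedAddCommGroup X] [NormedSpace ℂ X]
    [CompleteSpace X] (T : X →L[ℂ] X)
    (hdense : ∀ U : Set ℂ, RelativelyOpenInSpectrum T U →
      Dense (glocalSubspace T (closure U)))
    (M : Submodule ℂ (StrongDual ℂ X)) (hMclosed : IsClosed (M : Set (StrongDual ℂ X)))
    (hMbot : M ≠ ⊥) (hMtop : M ≠ ⊤)
    (hinv : ∀ x ∈ M, dualOp T x ∈ M) :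
    spectrum ℂ (dualOp T) ⊆ spectrum ℂ (restrictOp (dualOp T) M hinv) ∧
      spectrum ℂ (restrictOp (dualOp T) M hinv) ⊆ fullSpectrum (spectrum ℂ (dualOp T)) :=
  ⟨spectrum_subset_restrict T hdense M hMclosed hMbot hinv,
    restrict_spectrum_subset_fullSpectrum (dualOp T) M hMclosed hinv⟩

end
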